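/- Conservative compression of a directed closed chain: let K be a directed cycle on n ≥ 2 distinct nodes with edge weights e_1, …, e_n > 0 along the cycle, and let m = min_k e_k. Then the market K' obtained by subtracting m from every edge (so the minimal edges vanish) is net-equivalent to K, satisfies the conservative tolerances 0 ≤ e'_k ≤ e_k, and reduces the total gross notional by exactly n·m. Moreover no conservative net-equivalent modification of K achieves a total gross notional lower than Σ_k e_k − n·m. -/

import Mathlib

open Finset

/-- conservatively compressing a directed closed chain by
subtracting the minimum edge weight from every edge is net-equivalent,
respects the conservative tolerances, reduces total notional by `n * m`,
and no conservative net-equivalent modification does better. -/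
theorem cycle_conservative_compression (n : ℕ) (hn : 2 ≤ n)
    (w : Fin n → ℝ) (hw : ∀ k, 0 < w k)
    (m : ℝ) (hm : IsLeast (Set.range w) m)
    (e e' : Fin n → Fin n → ℝ)
    (he : ∀ i j, e i j = if j = i + ⟨1, by omega⟩ then w i else 0)
    (he' : ∀ i j, e' i j = if j = i + ⟨1, by omega⟩ then w i - m else 0) :
    (∀ i, (∑ j, e' i j - ∑ j, e' j i) = (∑ j, e i j - ∑ j, e j i)) ∧
    (∀ i j, 0 ≤ e' i j ∧ e' i j ≤ e i j) ∧
    (∑ i, ∑ j, e i j) - (∑ i, ∑ j, e' i j) = n * m ∧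
    (∀ f : Fin n → Fin n → ℝ,
      (∀ i j, 0 ≤ f i j ∧ f i j ≤ e i j) →
      (∀ i, (∑ j, f i j - ∑ j, f j i) = (∑ j, e i j - ∑ j, e j i)) →
      (∑ i, ∑ j, e i j) - n * m ≤ ∑ i, ∑ j, f i j) := by
  haveI : NeZero n := ⟨by omega⟩
  set o : Fin n := ⟨1, by omega⟩ with ho
  have ho1 : o = 1 := by
    apply Fin.ext
    simp [ho, Fin.val_one, Nat.mod_eq_of_lt (by omega : 1 < n)]
  obtain ⟨⟨k0, hk0⟩, hlb⟩ := hm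
  have hm0 : 0 < m := hk0 ▸ hw k0
  have hmle : ∀ i, m ≤ w i := fun i => hlb ⟨i, rfl⟩
  have hcond : ∀ i j : Fin n, (i = j + o) ↔ (j = i - o) := by
    intro i j
    constructor
    · intro h; rw [h]; simp
    · intro h; rw [h]; simp
  have row_e : ∀ i, ∑ j, e i j = w i := by
    intro i; simp only [he]
    rw [Finset.sum_ite_eq' univ (i + o) (fun _ => w i)]; simp
  have col_e : ∀ i, ∑ j, e j i = w (i - o) := by
    intro i; simp only [he]
    rw [show (∑ j, if i = j + o then w j else 0 : ℝ) = ∑ j, if j = i - o then w j else 0 from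
      Finset.sum_congr rfl (fun j _ => by simp only [hcond i j])]
    rw [Finset.sum_ite_eq' univ (i - o) (fun j => w j)]; simp
  have row_e' : ∀ i, ∑ j, e' i j = w i - m := by
    intro i; simp only [he']
    rw [Finset.sum_ite_eq' univ (i + o) (fun _ => w i - m)]; simp
  have col_e' : ∀ i, ∑ j, e' j i = w (i - o) - m := by
    intro i; simp only [he']
    rw [show (∑ j, if i = j + o then w j - m else 0 : ℝ) = ∑ j, if j = i - o then w j - m else 0 from
      Finset.sum_congr rfl (fun j _ => by simp only [hcond i j])]
    rw [Finset.sum_ite_eq' univ (i - o) (fun j => w j - m)]; simp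
  refine ⟨?_, ?_, ?_, ?_⟩
  · intro i
    rw [row_e, col_e, row_e', col_e']; ring
  · intro i j
    rw [he, he']
    split
    · exact ⟨by linarith [hmle i], by linarith⟩
    · exact ⟨le_refl 0, le_refl 0⟩
  · have h1 : ∑ i, ∑ j, e i j = ∑ i, w i := Finset.sum_congr rfl (fun i _ => row_e i)
    have h2 : ∑ i, ∑ j, e' i j = ∑ i, (w i - m) := Finset.sum_congr rfl (fun i _ => row_e' i)
    rw [h1, h2, Finset.sum_sub_distrib, Finset.sum_const, Finset.card_univ, Fintype.card_fin]
    ring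
  · intro f hf hnet
    have hf0 : ∀ i j, j ≠ i + o → f i j = 0 := by
      intro i j h
      have h2 := (hf i j).2
      rw [he] at h2
      simp only [h, if_false] at h2
      linarith [(hf i j).1]
    set g : Fin n → ℝ := fun i => f i (i + o) with hg
    have row_f : ∀ i, ∑ j, f i j = g i := by
      intro i
      exact Finset.sum_eq_single (i + o) (fun j _ hj => hf0 i j hj)
        (fun h => absurd (mem_univ _) h)
    have col_f : ∀ i, ∑ j, f j i = g (i - o) := by
      intro i
      have : ∑ j, f j i = f (i - o) i := by
        refine Finset.sum_eq_single (i - o) (fun j _ hj => hf0 j i ?_)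
          (fun h => absurd (mem_univ _) h)
        intro hc
        exact hj ((hcond i j).mp hc)
      rw [this, hg]
      simp
    have hstep : ∀ i : Fin n, g (i + o) - w (i + o) = g i - w i := by
      intro i
      have h := hnet (i + o)
      rw [row_f, col_f, row_e, col_e] at h
      simp only [add_sub_cancel_right] at h
      linarith
    open Fin.NatCast in
    have hconst : ∀ i, g i - w i = g 0 - w 0 := by
      have key : ∀ k : ℕ, g ((k : Fin n)) - w ((k : Fin n)) = g 0 - w 0 := by
        intro k
        induction k with
        | zero => simp
        | succ k ih =>
          have hk : ((k + 1 : ℕ) : Fin n) = ((k : ℕ) : Fin n) + o := by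
            push_cast [ho1]; ring
          rw [hk, hstep]; exact ih
      intro i
      have := key i.val
      rwa [Fin.cast_val_eq_self] at this
    have hgnn : ∀ i, 0 ≤ g i := fun i => (hf i (i + o)).1
    have hc : -m ≤ g 0 - w 0 := by
      have := hconst k0
      have h1 := hgnn k0
      rw [hk0] at this
      linarith
    have hsumf : ∑ i, ∑ j, f i j = ∑ i, (w i + (g 0 - w 0)) := by
      rw [Finset.sum_congr rfl (fun i _ => row_f i)]
      exact Finset.sum_congr rfl (fun i _ => by linarith [hconst i])
    have h1 : ∑ i, ∑ j, e i j = ∑ i, w i := Finset.sum_congr rfl (fun i _ => row_e i)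
    rw [h1, hsumf, Finset.sum_add_distrib, Finset.sum_const, Finset.card_univ, Fintype.card_fin]
    have hn0 : (0 : ℝ) ≤ n := by positivity
    have : (n : ℝ) * (-m) ≤ (n : ℝ) * (g 0 - w 0) := by
      exact mul_le_mul_of_nonneg_left hc hn0
    simp only [nsmul_eq_mul]
    nlinarith
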